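/- Let n ≥ 5 be odd and let ℓ ∈ [5, (n−1)/2] be odd. Then the set C_ℓ = {0̄, 1̄, 3̄, ..., ℓ̄} ∪ {(ℓ+1)‾} ⊆ ℤ/nℤ is an atom of the reduced power monoid P_{fin,0}(ℤ/nℤ); the sets C_1 = {0̄, 2̄} and C_3 = {0̄, 2̄, 3̄, 4̄} are atoms as well. -/
import Mathlib
open Pointwise

section aux
variable {n : ℕ} [NeZero n]

omit [NeZero n] in
lemma modCases {s : ℕ} (hn : 2 ≤ n) (h : s ≤ n + 1) : s % n = s ∨ s % n + n = s := by
  rcases lt_or_ge s n with h' | h'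
  · left; exact Nat.mod_eq_of_lt h'
  · right
    have hs : s - n < n := by omega
    rw [Nat.mod_eq_sub_mod h', Nat.mod_eq_of_lt hs]
    exact Nat.sub_add_cancel h'

lemma zmodEqCast (z : ZMod n) (k : ℕ) (hk : k < n) : z = (k : ZMod n) ↔ z.val = k := by
  constructor
  · rintro rfl; exact ZMod.val_cast_of_lt hk
  · intro h; rw [← h, ZMod.natCast_val, ZMod.cast_id]

lemma sumsetDecomp {A X Y : Finset (ZMod n)} (P : ℕ → Prop)
    (hmem : ∀ z : ZMod n, z ∈ A ↔ P z.val)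
    (hX0 : (0 : ZMod n) ∈ X) (hY0 : (0 : ZMod n) ∈ Y) (hA : A = X + Y) :
    (∀ x ∈ X, P x.val) ∧ (∀ y ∈ Y, P y.val) ∧
    (∀ x ∈ X, ∀ y ∈ Y, P ((x.val + y.val) % n)) ∧
    (∀ a : ℕ, a < n → P a → ∃ x ∈ X, ∃ y ∈ Y, (x.val + y.val) % n = a) := by
  have hXA : ∀ x ∈ X, x ∈ A := fun x hx => by
    rw [hA]; simpa using Finset.add_mem_add hx hY0
  have hYA : ∀ y ∈ Y, y ∈ A := fun y hy => by
    rw [hA]; simpa using Finset.add_mem_add hX0 hy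
  refine ⟨fun x hx => (hmem x).1 (hXA x hx), fun y hy => (hmem y).1 (hYA y hy), ?_, ?_⟩
  · intro x hx y hy
    have h : x + y ∈ A := by rw [hA]; exact Finset.add_mem_add hx hy
    have h2 := (hmem _).1 h
    rwa [ZMod.val_add] at h2
  · intro a ha hPa
    have h : (a : ZMod n) ∈ A := by rw [hmem, ZMod.val_cast_of_lt ha]; exact hPa
    rw [hA, Finset.mem_add] at h
    obtain ⟨x, hx, y, hy, hxy⟩ := h
    exact ⟨x, hx, y, hy, by rw [← ZMod.val_add, hxy, ZMod.val_cast_of_lt ha]⟩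

omit [NeZero n] in
lemma nonzeroElt {X : Finset (ZMod n)} (hX0 : (0 : ZMod n) ∈ X) (hne : X ≠ {0}) :
    ∃ x ∈ X, x.val ≠ 0 := by
  by_contra h
  push_neg at h
  exact hne (Finset.eq_singleton_iff_unique_mem.mpr
    ⟨hX0, fun x hx => by have := h x hx; simpa using (ZMod.val_eq_zero x).mp (by omega)⟩)

omit [NeZero n] in
lemma caseA {ℓ : ℕ} (hl1 : 5 ≤ ℓ) (hlo : ℓ % 2 = 1) (hn2 : 2 * ℓ + 1 ≤ n)
    {X Y : Finset (ZMod n)}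
    (hPX : ∀ x ∈ X, x.val = 0 ∨ (x.val % 2 = 1 ∧ x.val ≤ ℓ) ∨ x.val = ℓ + 1)
    (hPY : ∀ y ∈ Y, y.val = 0 ∨ (y.val % 2 = 1 ∧ y.val ≤ ℓ) ∨ y.val = ℓ + 1)
    (hsum : ∀ x ∈ X, ∀ y ∈ Y, (x.val + y.val) % n = 0 ∨
        (((x.val + y.val) % n) % 2 = 1 ∧ (x.val + y.val) % n ≤ ℓ) ∨
        (x.val + y.val) % n = ℓ + 1)
    (hsurj : ∀ a : ℕ, a < n → (a = 0 ∨ (a % 2 = 1 ∧ a ≤ ℓ) ∨ a = ℓ + 1) →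
        ∃ x ∈ X, ∃ y ∈ Y, (x.val + y.val) % n = a)
    (hx1 : ∃ x ∈ X, x.val = 1) (hy0 : ∃ y ∈ Y, y.val ≠ 0) : False := by
  obtain ⟨x₁, hx₁X, hx₁v⟩ := hx1
  obtain ⟨y₀, hy₀Y, hy₀v⟩ := hy0
  -- every element of Y has val 0 or ℓ
  have hYsmall : ∀ y ∈ Y, y.val = 0 ∨ y.val = ℓ := by
    intro y hy
    have h1 := hsum x₁ hx₁X y hy
    have h2 := hPY y hy
    rw [hx₁v] at h1
    have hmc := modCases (n := n) (by omega) (s := 1 + y.val) (by omega)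
    omega
  have hy₀ℓ : y₀.val = ℓ := by rcases hYsmall y₀ hy₀Y with h | h <;> omega
  -- every element of X has val 0, 1, or (ℓ+1 with n = 2ℓ+1)
  have hXsmall : ∀ x ∈ X, x.val = 0 ∨ x.val = 1 ∨ (x.val = ℓ + 1 ∧ n = 2 * ℓ + 1) := by
    intro x hx
    have h1 := hsum x hx y₀ hy₀Y
    have h2 := hPX x hx
    rw [hy₀ℓ] at h1
    have hmc := modCases (n := n) (by omega) (s := x.val + ℓ) (by omega)
    omega
  obtain ⟨x, hxX, y, hyY, hxy⟩ := hsurj 3 (by omega) (by omega)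
  have h1 := hXsmall x hxX
  have h2 := hYsmall y hyY
  have hmc := modCases (n := n) (by omega) (s := x.val + y.val) (by omega)
  omega

end aux

/-- `A` is an atom of the reduced power monoid `P_{fin,0}(ZMod n)`. -/
def IsAtomPow0 {n : ℕ} (A : Finset (ZMod n)) : Prop :=
  (0 : ZMod n) ∈ A ∧ A ≠ {0} ∧
    ∀ X Y : Finset (ZMod n), (0 : ZMod n) ∈ X → (0 : ZMod n) ∈ Y →
      A = X + Y → X = {0} ∨ Y = {0}

theorem Cl_is_atom (n : ℕ) (hn : 5 ≤ n) (hodd : Odd n)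
    (ℓ : ℕ) (hl1 : 5 ≤ ℓ) (hlodd : Odd ℓ) (hl2 : ℓ ≤ (n - 1) / 2) :
    IsAtomPow0 (({0} ∪ (((Finset.range (ℓ + 1)).filter (fun k => Odd k)).image
        (fun k : ℕ => (k : ZMod n))) ∪ {((ℓ + 1 : ℕ) : ZMod n)}) : Finset (ZMod n)) ∧
    IsAtomPow0 ({0, 2} : Finset (ZMod n)) ∧
    IsAtomPow0 ({0, 2, 3, 4} : Finset (ZMod n)) := by
  obtain ⟨m, hm⟩ := hodd
  obtain ⟨t, ht⟩ := hlodd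
  have hlo : ℓ % 2 = 1 := by omega
  have hn2 : 2 * ℓ + 1 ≤ n := by omega
  haveI : NeZero n := ⟨by omega⟩
  -- membership lemmas
  have hmemL : ∀ z : ZMod n,
      z ∈ (({0} ∪ (((Finset.range (ℓ + 1)).filter (fun k => Odd k)).image
        (fun k : ℕ => (k : ZMod n))) ∪ {((ℓ + 1 : ℕ) : ZMod n)}) : Finset (ZMod n)) ↔
      (z.val = 0 ∨ (z.val % 2 = 1 ∧ z.val ≤ ℓ) ∨ z.val = ℓ + 1) := by
    intro z
    simp only [Finset.mem_union, Finset.mem_singleton, Finset.mem_image, Finset.mem_filter,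
      Finset.mem_range]
    constructor
    · rintro ((rfl | ⟨k, ⟨hk1, hk2⟩, rfl⟩) | h3)
      · left; exact ZMod.val_zero
      · right; left
        rw [ZMod.val_cast_of_lt (by omega)]
        exact ⟨(Nat.odd_iff).mp hk2, by omega⟩
      · right; right; exact (zmodEqCast z (ℓ + 1) (by omega)).mp h3
    · rintro (h | ⟨h1, h2⟩ | h)
      · left; left; exact (ZMod.val_eq_zero z).mp h
      · left; right
        exact ⟨z.val, ⟨by omega, Nat.odd_iff.mpr h1⟩, ((zmodEqCast z z.val (z.val_lt)).mpr rfl).symm⟩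
      · right; exact (zmodEqCast z (ℓ + 1) (by omega)).mpr h
  have hmem1 : ∀ z : ZMod n, z ∈ ({0, 2} : Finset (ZMod n)) ↔ (z.val = 0 ∨ z.val = 2) := by
    intro z
    have h2 : (2 : ZMod n) = ((2 : ℕ) : ZMod n) := by norm_cast
    simp only [Finset.mem_insert, Finset.mem_singleton, h2]
    rw [zmodEqCast z 2 (by omega)]
    constructor
    · rintro (rfl | h)
      · left; exact ZMod.val_zero
      · right; exact h
    · rintro (h | h)
      · left; exact (ZMod.val_eq_zero z).mp h
      · right; exact h
  have hmem3 : ∀ z : ZMod n, z ∈ ({0, 2, 3, 4} : Finset (ZMod n)) ↔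
      (z.val = 0 ∨ z.val = 2 ∨ z.val = 3 ∨ z.val = 4) := by
    intro z
    have h2 : (2 : ZMod n) = ((2 : ℕ) : ZMod n) := by norm_cast
    have h3 : (3 : ZMod n) = ((3 : ℕ) : ZMod n) := by norm_cast
    have h4 : (4 : ZMod n) = ((4 : ℕ) : ZMod n) := by norm_cast
    simp only [Finset.mem_insert, Finset.mem_singleton, h2, h3, h4]
    rw [zmodEqCast z 2 (by omega), zmodEqCast z 3 (by omega), zmodEqCast z 4 (by omega)]
    constructor
    · rintro (rfl | h)
      · left; exact ZMod.val_zero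
      · tauto
    · rintro (h | h)
      · left; exact (ZMod.val_eq_zero z).mp h
      · tauto
  refine ⟨?_, ?_, ?_⟩
  · -- C_ℓ
    refine ⟨(hmemL 0).mpr (by left; exact ZMod.val_zero), ?_, ?_⟩
    · intro hAeq
      have h1 : ((1 : ℕ) : ZMod n) ∈ ({(0 : ZMod n)} : Finset (ZMod n)) := by
        rw [← hAeq]; exact (hmemL _).mpr (by rw [ZMod.val_cast_of_lt (by omega)]; omega)
      rw [Finset.mem_singleton] at h1
      have := (ZMod.val_eq_zero _).mpr h1
      rw [ZMod.val_cast_of_lt (by omega)] at this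
      omega
    · intro X Y hX0 hY0 hA
      obtain ⟨hPX, hPY, hsum, hsurj⟩ := sumsetDecomp (fun a => a = 0 ∨ (a % 2 = 1 ∧ a ≤ ℓ) ∨ a = ℓ + 1) hmemL hX0 hY0 hA
      by_contra hcon
      push_neg at hcon
      obtain ⟨hXne, hYne⟩ := hcon
      obtain ⟨x₀, hx₀X, hx₀v⟩ := nonzeroElt hX0 hXne
      obtain ⟨y₀, hy₀Y, hy₀v⟩ := nonzeroElt hY0 hYne
      -- symmetric versions
      have hsum' : ∀ y ∈ Y, ∀ x ∈ X, (y.val + x.val) % n = 0 ∨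
          (((y.val + x.val) % n) % 2 = 1 ∧ (y.val + x.val) % n ≤ ℓ) ∨
          (y.val + x.val) % n = ℓ + 1 := by
        intro y hy x hx; rw [Nat.add_comm]; exact hsum x hx y hy
      have hsurj' : ∀ a : ℕ, a < n → (a = 0 ∨ (a % 2 = 1 ∧ a ≤ ℓ) ∨ a = ℓ + 1) →
          ∃ y ∈ Y, ∃ x ∈ X, (y.val + x.val) % n = a := by
        intro a ha hPa
        obtain ⟨x, hx, y, hy, h⟩ := hsurj a ha hPa
        exact ⟨y, hy, x, hx, by rwa [Nat.add_comm]⟩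
      -- 1 ∈ A gives the trichotomy
      obtain ⟨x, hxX, y, hyY, hxy⟩ := hsurj 1 (by omega) (by omega)
      have hPx := hPX x hxX
      have hPy := hPY y hyY
      have hmc := modCases (n := n) (by omega) (s := x.val + y.val) (by omega)
      have htri : x.val = 1 ∨ y.val = 1 ∨
          (x.val = ℓ + 1 ∧ y.val = ℓ + 1 ∧ n = 2 * ℓ + 1) := by omega
      rcases htri with h | h | ⟨hx, hy, hneq⟩
      · exact caseA hl1 hlo hn2 hPX hPY hsum hsurj ⟨x, hxX, h⟩ ⟨y₀, hy₀Y, hy₀v⟩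
      · exact caseA hl1 hlo hn2 hPY hPX hsum' hsurj' ⟨y, hyY, h⟩ ⟨x₀, hx₀X, hx₀v⟩
      · -- case B : n = 2ℓ+1 and ℓ+1 ∈ both
        have hYsmall : ∀ y' ∈ Y, y'.val = 0 ∨ y'.val = ℓ ∨ y'.val = ℓ + 1 := by
          intro y' hy'
          have h1 := hsum x hxX y' hy'
          have h2 := hPY y' hy'
          rw [hx] at h1
          have hmc := modCases (n := n) (by omega) (s := (ℓ + 1) + y'.val) (by omega)
          omega
        have hXsmall : ∀ x' ∈ X, x'.val = 0 ∨ x'.val = ℓ ∨ x'.val = ℓ + 1 := by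
          intro x' hx'
          have h1 := hsum x' hx' y hyY
          have h2 := hPX x' hx'
          rw [hy] at h1
          have hmc := modCases (n := n) (by omega) (s := x'.val + (ℓ + 1)) (by omega)
          omega
        obtain ⟨x', hx'X, y', hy'Y, hxy'⟩ := hsurj 3 (by omega) (by omega)
        have h1 := hXsmall x' hx'X
        have h2 := hYsmall y' hy'Y
        have hmc := modCases (n := n) (by omega) (s := x'.val + y'.val) (by omega)
        omega
  · -- C_1 = {0,2}
    refine ⟨(hmem1 0).mpr (by left; exact ZMod.val_zero), ?_, ?_⟩
    · intro hAeq
      have h1 : (2 : ZMod n) ∈ ({(0 : ZMod n)} : Finset (ZMod n)) := by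
        rw [← hAeq]; simp
      rw [Finset.mem_singleton] at h1
      have h2 : ((2 : ℕ) : ZMod n) = 0 := by exact_mod_cast h1
      have h3 := ZMod.val_cast_of_lt (show (2 : ℕ) < n by omega)
      rw [h2, ZMod.val_zero] at h3
      omega
    · intro X Y hX0 hY0 hA
      obtain ⟨hPX, hPY, hsum, hsurj⟩ := sumsetDecomp (fun a => a = 0 ∨ a = 2) hmem1 hX0 hY0 hA
      by_contra hcon
      push_neg at hcon
      obtain ⟨hXne, hYne⟩ := hcon
      obtain ⟨x₀, hx₀X, hx₀v⟩ := nonzeroElt hX0 hXne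
      obtain ⟨y₀, hy₀Y, hy₀v⟩ := nonzeroElt hY0 hYne
      have h1 := hsum x₀ hx₀X y₀ hy₀Y
      have h2 := hPX x₀ hx₀X
      have h3 := hPY y₀ hy₀Y
      have hmc := modCases (n := n) (by omega) (s := x₀.val + y₀.val) (by omega)
      omega
  · -- C_3 = {0,2,3,4}
    refine ⟨(hmem3 0).mpr (by left; exact ZMod.val_zero), ?_, ?_⟩
    · intro hAeq
      have h1 : (2 : ZMod n) ∈ ({(0 : ZMod n)} : Finset (ZMod n)) := by
        rw [← hAeq]; simp
      rw [Finset.mem_singleton] at h1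
      have h2 : ((2 : ℕ) : ZMod n) = 0 := by exact_mod_cast h1
      have h3 := ZMod.val_cast_of_lt (show (2 : ℕ) < n by omega)
      rw [h2, ZMod.val_zero] at h3
      omega
    · intro X Y hX0 hY0 hA
      obtain ⟨hPX, hPY, hsum, hsurj⟩ := sumsetDecomp (fun a => a = 0 ∨ a = 2 ∨ a = 3 ∨ a = 4) hmem3 hX0 hY0 hA
      by_contra hcon
      push_neg at hcon
      obtain ⟨hXne, hYne⟩ := hcon
      obtain ⟨x₀, hx₀X, hx₀v⟩ := nonzeroElt hX0 hXne
      obtain ⟨y₀, hy₀Y, hy₀v⟩ := nonzeroElt hY0 hYne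
      have h0 := hsum x₀ hx₀X y₀ hy₀Y
      have hx2 : x₀.val = 2 ∧ y₀.val = 2 := by
        have h2 := hPX x₀ hx₀X
        have h3 := hPY y₀ hy₀Y
        have hmc := modCases (n := n) (by omega) (s := x₀.val + y₀.val) (by omega)
        omega
      have hXsmall : ∀ x ∈ X, x.val = 0 ∨ x.val = 2 := by
        intro x hx
        have h1 := hsum x hx y₀ hy₀Y
        have h2 := hPX x hx
        have hmc := modCases (n := n) (by omega) (s := x.val + y₀.val) (by omega)
        omega
      have hYsmall : ∀ y ∈ Y, y.val = 0 ∨ y.val = 2 := by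
        intro y hy
        have h1 := hsum x₀ hx₀X y hy
        have h2 := hPY y hy
        have hmc := modCases (n := n) (by omega) (s := x₀.val + y.val) (by omega)
        omega
      obtain ⟨x, hxX, y, hyY, hxy⟩ := hsurj 3 (by omega) (by omega)
      have h1 := hXsmall x hxX
      have h2 := hYsmall y hyY
      have hmc := modCases (n := n) (by omega) (s := x.val + y.val) (by omega)
      omega
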